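/- A vertex u belongs to the subtree core S_c(T) if and only if for each neighbour v of u, f_{T_e(u)}(u) ≥ f_{T_e(v)}(v), where e = {u,v}. Moreover, if u ∈ S_c(T) and equality holds for some neighbour v, then v ∈ S_c(T). -/

import Mathlib

open SimpleGraph Finset

/-- For an edge `{u,v}` of a tree `G`, the vertex set of the component `T_e(u)` of `G - e`
containing `u`: the vertices strictly closer to `u` than to `v`. -/
def sideOf {V : Type*} (G : SimpleGraph V) (u v : V) : Set V :=
  {w | G.dist w u < G.dist w v}

/-- Number of subtrees of `G` containing `x`. -/
noncomputable def numSubtrees {V : Type*} (G : SimpleGraph V) (x : V) : ℕ :=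
  {S : Finset V | x ∈ S ∧ (G.induce (S : Set V)).Connected}.ncard

/-- Number of subtrees of the subtree of `G` induced on `A` which contain `x`. -/
noncomputable def numSubtreesIn {V : Type*} (G : SimpleGraph V) (A : Set V) (x : V) : ℕ :=
  {S : Finset V | x ∈ S ∧ ↑S ⊆ A ∧ (G.induce (S : Set V)).Connected}.ncard

/-- The subtree core of `G`: the set of vertices contained in the maximum number of subtrees. -/
noncomputable def subtreeCore {V : Type*} (G : SimpleGraph V) : Set V :=
  {v | ∀ u, numSubtrees G u ≤ numSubtrees G v}

namespace TreeCoreAux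

variable {V : Type*} {G : SimpleGraph V}

/-- In a tree, every path between two vertices has length equal to the distance. -/
lemma path_length_eq_dist (hT : G.IsTree) {x y : V} {p : G.Walk x y} (hp : p.IsPath) :
    p.length = G.dist x y := by
  obtain ⟨q, hq, hql⟩ := hT.isConnected.exists_path_of_dist x y
  have : p = q := Subtype.mk_eq_mk.mp (hT.IsAcyclic.path_unique ⟨p, hp⟩ ⟨q, hq⟩)
  rw [this, hql]

lemma dist_dichotomy (hT : G.IsTree) {u v : V} (h : G.Adj u v) (w : V) :
    G.dist w v = G.dist w u + 1 ∨ G.dist w u = G.dist w v + 1 := by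
  classical
  obtain ⟨p, hp, hpl⟩ := hT.isConnected.exists_path_of_dist w u
  by_cases hv : v ∈ p.support
  · right
    have h1 : (p.takeUntil v hv).length = G.dist w v :=
      path_length_eq_dist hT (hp.takeUntil hv)
    have h2 : (p.dropUntil v hv).length = G.dist v u :=
      path_length_eq_dist hT (hp.dropUntil hv)
    have h3 : (p.takeUntil v hv).length + (p.dropUntil v hv).length = p.length := by
      rw [← SimpleGraph.Walk.length_append, p.take_spec hv]
    have h4 : G.dist v u = 1 := SimpleGraph.dist_eq_one_iff_adj.mpr h.symm
    omega
  · left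
    have hcp : (p.concat h).IsPath := by
      rw [← SimpleGraph.Walk.isPath_reverse_iff, SimpleGraph.Walk.reverse_concat]
      exact (SimpleGraph.Walk.isPath_reverse_iff p).mpr hp |>.cons
        (by rwa [SimpleGraph.Walk.support_reverse, List.mem_reverse])
    have := path_length_eq_dist hT hcp
    rw [SimpleGraph.Walk.length_concat] at this
    omega

/-- Crossing lemma: an edge from the `u`-side leaving the `u`-side must land on `v`. -/
lemma crossing (hT : G.IsTree) {u v a b : V} (h : G.Adj u v)
    (ha : G.dist a u < G.dist a v) (hab : G.Adj a b)
    (hb : ¬ G.dist b u < G.dist b v) : b = v := by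
  classical
  by_contra hbv
  have hAv : G.dist a v = G.dist a u + 1 := by
    rcases dist_dichotomy hT h a with h1 | h1 <;> omega
  have hBu : G.dist b u = G.dist b v + 1 := by
    rcases dist_dichotomy hT h b with h1 | h1 <;> omega
  set k := G.dist a u with hk
  have hd1 : G.dist a b = 1 := SimpleGraph.dist_eq_one_iff_adj.mpr hab
  have tri1 : G.dist a v ≤ G.dist a b + G.dist b v := hT.isConnected.dist_triangle
  have tri2 : G.dist b u ≤ G.dist b a + G.dist a u := hT.isConnected.dist_triangle
  have hd2 : G.dist b a = 1 := SimpleGraph.dist_eq_one_iff_adj.mpr hab.symm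
  have hbv' : G.dist b v = k := by omega
  have hbu' : G.dist b u = k + 1 := by omega
  obtain ⟨p, hp, hpl⟩ := hT.isConnected.exists_path_of_dist a u
  have hvp : v ∉ p.support := by
    intro hmem
    have : G.dist a v ≤ (p.takeUntil v hmem).length := SimpleGraph.dist_le _
    have := p.length_takeUntil_le hmem
    omega
  have hbp : b ∉ p.support := by
    intro hmem
    have : G.dist b u ≤ (p.dropUntil b hmem).length := SimpleGraph.dist_le _
    have := p.length_dropUntil_le hmem
    omega
  have hq : (SimpleGraph.Walk.cons hab.symm p).IsPath := hp.cons hbp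
  have hvq : v ∉ (SimpleGraph.Walk.cons hab.symm p).support := by
    rw [SimpleGraph.Walk.support_cons]
    intro hmem
    rcases List.mem_cons.mp hmem with rfl | hmem'
    · exact hbv rfl
    · exact hvp hmem'
  have hr : ((SimpleGraph.Walk.cons hab.symm p).concat h).IsPath := by
    rw [← SimpleGraph.Walk.isPath_reverse_iff, SimpleGraph.Walk.reverse_concat]
    exact ((SimpleGraph.Walk.isPath_reverse_iff _).mpr hq).cons
      (by rwa [SimpleGraph.Walk.support_reverse, List.mem_reverse])
  have hrl := path_length_eq_dist hT hr
  rw [SimpleGraph.Walk.length_concat, SimpleGraph.Walk.length_cons] at hrl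
  omega

/-- Side monotonicity along a path `a - b - c`: the `c`-side of edge `bc` sits inside
the `b`-side of edge `ab`. -/
lemma side_mono (hT : G.IsTree) {a b c : V} (hab : G.Adj a b) (hbc : G.Adj b c)
    (hac : a ≠ c) {x : V} (hx : x ∈ sideOf G c b) : x ∈ sideOf G b a := by
  classical
  simp only [sideOf, Set.mem_setOf_eq] at hx ⊢
  have hxc : G.dist x b = G.dist x c + 1 := by
    rcases dist_dichotomy hT hbc.symm x with h1 | h1 <;> omega
  rcases dist_dichotomy hT hab.symm x with h1 | h1
  · omega
  · -- dist x b = dist x a + 1 : derive a contradiction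
    exfalso
    set k := G.dist x b with hk
    obtain ⟨p, hp, hpl⟩ := hT.isConnected.exists_path_of_dist x a
    obtain ⟨q, hq, hql⟩ := hT.isConnected.exists_path_of_dist x c
    have hbp : b ∉ p.support := by
      intro hmem
      have h5 : G.dist x b ≤ (p.takeUntil b hmem).length := SimpleGraph.dist_le _
      have := p.length_takeUntil_le hmem
      omega
    have hbq : b ∉ q.support := by
      intro hmem
      have h5 : G.dist x b ≤ (q.takeUntil b hmem).length := SimpleGraph.dist_le _
      have := q.length_takeUntil_le hmem
      omega
    have hp' : (p.concat hab).IsPath := by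
      rw [← SimpleGraph.Walk.isPath_reverse_iff, SimpleGraph.Walk.reverse_concat]
      exact ((SimpleGraph.Walk.isPath_reverse_iff p).mpr hp).cons
        (by rwa [SimpleGraph.Walk.support_reverse, List.mem_reverse])
    have hq' : (q.concat hbc.symm).IsPath := by
      rw [← SimpleGraph.Walk.isPath_reverse_iff, SimpleGraph.Walk.reverse_concat]
      exact ((SimpleGraph.Walk.isPath_reverse_iff q).mpr hq).cons
        (by rwa [SimpleGraph.Walk.support_reverse, List.mem_reverse])
    have heq : p.concat hab = q.concat hbc.symm :=
      Subtype.mk_eq_mk.mp (hT.IsAcyclic.path_unique ⟨p.concat hab, hp'⟩ ⟨q.concat hbc.symm, hq'⟩)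
    have hcq : c ∈ (q.concat hbc.symm).support := by
      rw [SimpleGraph.Walk.support_concat]
      exact List.mem_append.mpr (Or.inl q.end_mem_support)
    rw [← heq, SimpleGraph.Walk.support_concat] at hcq
    rcases List.mem_append.mp hcq with hcp | hcb
    · have h6 : (p.takeUntil c hcp).length = G.dist x c :=
        path_length_eq_dist hT (hp.takeUntil hcp)
      have h7 : (p.takeUntil c hcp).length + (p.dropUntil c hcp).length = p.length := by
        rw [← SimpleGraph.Walk.length_append, p.take_spec hcp]
      have h8 : (p.dropUntil c hcp).length = 0 := by omega
      exact hac (SimpleGraph.Walk.eq_of_length_eq_zero h8).symm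
    · exact hbc.ne (List.mem_singleton.mp hcb).symm

/-- A connected set containing `u` but not `v` lies in the `u`-side of edge `uv`. -/
lemma confined (hT : G.IsTree) {u v : V} (h : G.Adj u v) {S : Set V}
    (hS : (G.induce S).Connected) (hu : u ∈ S) (hv : v ∉ S) : S ⊆ sideOf G u v := by
  have key : ∀ {x y : S} (_ : (G.induce S).Walk x y),
      (x : V) ∈ sideOf G u v → (y : V) ∈ sideOf G u v := by
    intro x y w
    induction w with
    | nil => exact id
    | cons hadj q ih =>
      rename_i a b c
      intro hxside
      apply ih
      have hGadj : G.Adj (a : V) (b : V) := hadj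
      by_contra hbad
      have : (b : V) = v := crossing hT h hxside hGadj hbad
      exact hv (this ▸ b.2)
  intro w hw
  obtain ⟨p⟩ := hS.preconnected ⟨u, hu⟩ ⟨w, hw⟩
  refine key p ?_
  show G.dist u u < G.dist u v
  rw [SimpleGraph.dist_self, SimpleGraph.dist_eq_one_iff_adj.mpr h]
  omega

lemma insert_connected {b c : V} (h : G.Adj b c) {S : Finset V} [DecidableEq V] (hc : c ∈ S)
    (_hb : b ∉ S) (hS : (G.induce (S : Set V)).Connected) :
    (G.induce ((insert b S : Finset V) : Set V)).Connected := by
  have hsub : (S : Set V) ⊆ ((insert b S : Finset V) : Set V) := by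
    intro x hx; simp only [Finset.coe_insert, Set.mem_insert_iff]
    exact Or.inr hx
  let F : G.induce (S : Set V) →g G.induce ((insert b S : Finset V) : Set V) :=
    ⟨fun x => ⟨x.1, hsub x.2⟩, fun {x y} hadj => hadj⟩
  have hcmem : (c : V) ∈ ((insert b S : Finset V) : Set V) := hsub hc
  have hbmem : (b : V) ∈ ((insert b S : Finset V) : Set V) := by
    simp [Finset.coe_insert]
  have reach_c : ∀ x : ((insert b S : Finset V) : Set V),
      (G.induce ((insert b S : Finset V) : Set V)).Reachable x ⟨c, hcmem⟩ := by
    intro x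
    by_cases hx : (x : V) ∈ S
    · have := (hS.preconnected ⟨x, hx⟩ ⟨c, hc⟩).map F
      convert this using 2 <;> rfl
    · have hxb : (x : V) = b := by
        have := x.2
        simp only [Finset.coe_insert, Set.mem_insert_iff, Finset.mem_coe] at this
        tauto
      have hadj : (G.induce ((insert b S : Finset V) : Set V)).Adj x ⟨c, hcmem⟩ := by
        show G.Adj (x : V) c
        rw [hxb]; exact h
      exact hadj.reachable
  exact (SimpleGraph.connected_iff_exists_forall_reachable _).mpr
    ⟨⟨c, hcmem⟩, fun w => (reach_c w).symm⟩

lemma singleton_connected (b : V) :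
    (G.induce (({b} : Finset V) : Set V)).Connected := by
  refine (SimpleGraph.connected_iff_exists_forall_reachable _).mpr ⟨⟨b, by simp⟩, fun w => ?_⟩
  have : w = ⟨b, by simp⟩ := by
    apply Subtype.ext
    have hw := w.2
    simpa using hw
  rw [this]

end TreeCoreAux


namespace TreeCoreAux

variable {V : Type*} {G : SimpleGraph V}

lemma count_split [Fintype V] (hT : G.IsTree) {u v : V} (h : G.Adj u v) :
    numSubtrees G u = {S : Finset V | u ∈ S ∧ v ∈ S ∧ (G.induce (S : Set V)).Connected}.ncard
      + numSubtreesIn G (sideOf G u v) u := by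
  classical
  rw [numSubtrees, numSubtreesIn]
  have hset : {S : Finset V | u ∈ S ∧ (G.induce (S : Set V)).Connected}
      = {S : Finset V | u ∈ S ∧ v ∈ S ∧ (G.induce (S : Set V)).Connected}
        ∪ {S : Finset V | u ∈ S ∧ ↑S ⊆ sideOf G u v ∧ (G.induce (S : Set V)).Connected} := by
    ext S
    simp only [Set.mem_setOf_eq, Set.mem_union]
    constructor
    · rintro ⟨hu, hconn⟩
      by_cases hv : v ∈ S
      · exact Or.inl ⟨hu, hv, hconn⟩
      · exact Or.inr ⟨hu, confined hT h hconn (Finset.mem_coe.mpr hu)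
          (fun hx => hv (Finset.mem_coe.mp hx)), hconn⟩
    · rintro (⟨hu, _, hconn⟩ | ⟨hu, _, hconn⟩) <;> exact ⟨hu, hconn⟩
  rw [hset, Set.ncard_union_eq ?_ (Set.toFinite _) (Set.toFinite _)]
  rw [Set.disjoint_left]
  rintro S ⟨_, hv, _⟩ ⟨_, hsub, _⟩
  have hmem : v ∈ sideOf G u v := hsub (Finset.mem_coe.mpr hv)
  simp only [sideOf, Set.mem_setOf_eq, SimpleGraph.dist_self] at hmem
  omega

lemma count_compare [Fintype V] (hT : G.IsTree) {u v : V} (h : G.Adj u v) :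
    numSubtrees G u + numSubtreesIn G (sideOf G v u) v
      = numSubtrees G v + numSubtreesIn G (sideOf G u v) u := by
  rw [count_split hT h, count_split hT h.symm]
  have hB : {S : Finset V | v ∈ S ∧ u ∈ S ∧ (G.induce (S : Set V)).Connected}
      = {S : Finset V | u ∈ S ∧ v ∈ S ∧ (G.induce (S : Set V)).Connected} := by
    ext S; simp only [Set.mem_setOf_eq]; tauto
  rw [hB]
  omega

lemma strict [Fintype V] (hTr : G.IsTree) {a b c : V} (hab : G.Adj a b) (hbc : G.Adj b c)
    (hac : a ≠ c) :
    numSubtreesIn G (sideOf G c b) c + 1 ≤ numSubtreesIn G (sideOf G b a) b := by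
  classical
  show {S : Finset V | c ∈ S ∧ ↑S ⊆ sideOf G c b ∧ (G.induce (S : Set V)).Connected}.ncard + 1
    ≤ {S : Finset V | b ∈ S ∧ ↑S ⊆ sideOf G b a ∧ (G.induce (S : Set V)).Connected}.ncard
  set A := {S : Finset V | c ∈ S ∧ ↑S ⊆ sideOf G c b ∧ (G.induce (S : Set V)).Connected} with hA
  set B := {S : Finset V | b ∈ S ∧ ↑S ⊆ sideOf G b a ∧ (G.induce (S : Set V)).Connected} with hBdef
  have hbside : b ∉ sideOf G c b := by
    simp only [sideOf, Set.mem_setOf_eq, SimpleGraph.dist_self,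
      SimpleGraph.dist_eq_one_iff_adj.mpr hbc.symm]
    omega
  have hbA : ∀ S ∈ A, b ∉ S := fun S hS hb => hbside (hS.2.1 (Finset.mem_coe.mpr hb))
  have hbmemside : b ∈ sideOf G b a := by
    simp only [sideOf, Set.mem_setOf_eq, SimpleGraph.dist_self,
      SimpleGraph.dist_eq_one_iff_adj.mpr hab.symm]
    omega
  have hsub : (insert b '' A) ∪ {({b} : Finset V)} ⊆ B := by
    rintro T hT
    rcases (Set.mem_union _ _ _).mp hT with hT1 | hT1
    · obtain ⟨S, hS, rfl⟩ := hT1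
      refine ⟨Finset.mem_insert_self _ _, ?_, ?_⟩
      · rw [Finset.coe_insert]
        intro x hx
        rcases Set.mem_insert_iff.mp hx with rfl | hx'
        · exact hbmemside
        · exact side_mono hTr hab hbc hac (hS.2.1 hx')
      · exact insert_connected hbc hS.1 (hbA S hS) hS.2.2
    · rw [Set.mem_singleton_iff] at hT1
      subst hT1
      refine ⟨Finset.mem_singleton_self _, ?_, singleton_connected b⟩
      rw [Finset.coe_singleton]
      intro x hx
      rw [Set.mem_singleton_iff] at hx
      subst hx
      exact hbmemside
  have hdisj : Disjoint (insert b '' A) {({b} : Finset V)} := by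
    rw [Set.disjoint_left]
    rintro T ⟨S, hS, rfl⟩ hT2
    rw [Set.mem_singleton_iff] at hT2
    have hcmem : c ∈ insert b S := Finset.mem_insert_of_mem hS.1
    rw [hT2] at hcmem
    exact hbc.ne (Finset.mem_singleton.mp hcmem).symm
  have hinj : Set.InjOn (insert b) A := by
    intro S hS S' hS' hEq
    have : (insert b S).erase b = (insert b S').erase b := by rw [hEq]
    rwa [Finset.erase_insert (hbA S hS), Finset.erase_insert (hbA S' hS')] at this
  calc A.ncard + 1
      = (insert b '' A).ncard + ({({b} : Finset V)} : Set (Finset V)).ncard := by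
        rw [Set.ncard_image_of_injOn hinj, Set.ncard_singleton]
    _ = ((insert b '' A) ∪ {({b} : Finset V)}).ncard :=
        (Set.ncard_union_eq hdisj (Set.toFinite _) (Set.toFinite _)).symm
    _ ≤ B.ncard := Set.ncard_le_ncard hsub (Set.toFinite _)

lemma step_down [Fintype V] (hT : G.IsTree) {a b : V} (hab : G.Adj a b)
    (hA : numSubtreesIn G (sideOf G b a) b ≤ numSubtreesIn G (sideOf G a b) a)
    {c : V} (hbc : G.Adj b c) (hca : c ≠ a) :
    numSubtreesIn G (sideOf G c b) c + 1 ≤ numSubtreesIn G (sideOf G b c) b := by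
  have h1 := strict hT hbc.symm hab.symm hca
  have h2 := strict hT hab hbc (fun he => hca he.symm)
  omega

lemma descend [Fintype V] (hT : G.IsTree) : ∀ {b w : V} (p : G.Walk b w), p.IsPath →
    ∀ a, G.Adj a b → a ∉ p.support →
    numSubtreesIn G (sideOf G b a) b ≤ numSubtreesIn G (sideOf G a b) a →
    numSubtrees G w ≤ numSubtrees G b := by
  intro b w p
  induction p with
  | nil => intro _ _ _ _ _; exact le_refl _
  | @cons x y z hadj q ih =>
    intro hp a haadj hasup hle
    have hq := (SimpleGraph.Walk.cons_isPath_iff hadj q).mp hp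
    have hya : y ≠ a := by
      intro he
      apply hasup
      rw [SimpleGraph.Walk.support_cons]
      exact List.mem_cons.mpr (Or.inr (he ▸ q.start_mem_support))
    have hstep := step_down hT haadj hle hadj hya
    have hcomp := count_compare hT hadj
    have hzy := ih hq.1 x hadj hq.2 (by omega)
    omega

end TreeCoreAux


/-- A vertex `u` belongs to the subtree core `S_c(T)` if and only if for each neighbour `v`
of `u`, `f_{T_e(u)}(u) ≥ f_{T_e(v)}(v)` where `e = {u,v}`. Moreover, if `u ∈ S_c(T)` and
equality holds for some neighbour `v`, then `v ∈ S_c(T)`. -/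
theorem subtreeCore_mem_iff {V : Type*} [Fintype V] (G : SimpleGraph V)
    (hT : G.IsTree) (u : V) :
    (u ∈ subtreeCore G ↔ ∀ v : V, G.Adj u v →
      numSubtreesIn G (sideOf G v u) v ≤ numSubtreesIn G (sideOf G u v) u) ∧
    (∀ v : V, G.Adj u v → u ∈ subtreeCore G →
      numSubtreesIn G (sideOf G u v) u = numSubtreesIn G (sideOf G v u) v →
      v ∈ subtreeCore G) := by
  classical
  have hcore_def : ∀ x : V, x ∈ subtreeCore G ↔ ∀ w, numSubtrees G w ≤ numSubtrees G x := by
    intro x; rfl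
  constructor
  · constructor
    · intro hcore v hadj
      have h1 : numSubtrees G v ≤ numSubtrees G u := (hcore_def u).mp hcore v
      have h2 := TreeCoreAux.count_compare hT hadj
      omega
    · intro hH
      rw [hcore_def]
      intro w
      obtain ⟨p, hp, _⟩ := hT.isConnected.exists_path_of_dist u w
      cases p with
      | nil => exact le_refl _
      | @cons _ y _ hadj q =>
        have hq := (SimpleGraph.Walk.cons_isPath_iff hadj q).mp hp
        have h1 := hH y hadj
        have h2 := TreeCoreAux.count_compare hT hadj
        have h3 := TreeCoreAux.descend hT q hq.1 u hadj hq.2 h1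
        omega
  · intro v hadj hcore heq
    rw [hcore_def] at hcore ⊢
    intro w
    have h2 := TreeCoreAux.count_compare hT hadj
    have h3 := hcore w
    omega
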